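/- Let v ∈ C^∞([0,T] × 𝕋²; ℝ²) be a divergence-free drift, let ρ ∈ C^∞([0,T] × 𝕋²) solve the transport equation ∂_t ρ + v·∇ρ = 0, and let θ ∈ C^∞([0,T] × 𝕋²) solve the advection–diffusion equation ∂_t θ + v·∇θ = ν Δθ with ν > 0 and θ(0) = ρ(0). Then sup_{t∈[0,T]} ‖θ(t) − ρ(t)‖²_{L²} ≤ ( 2ν ∫₀^T ‖∇ρ‖²_{L²} dt )^{1/2} ( 2ν ∫₀^T ‖∇θ‖²_{L²} dt )^{1/2} ≤ ( 2ν ∫₀^T ‖∇ρ‖²_{L²} dt )^{1/2} ‖ρ(0)‖_{L²}. -/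

import Mathlib

open MeasureTheory Real Filter Topology RealInnerProductSpace
open scoped Classical

noncomputable section

abbrev E2 := EuclideanSpace ℝ (Fin 2)

def e2 (i : Fin 2) : E2 := EuclideanSpace.single i 1

def per2 (k : Fin 2 → ℤ) : E2 := WithLp.toLp 2 (fun i => (k i : ℝ))

def Periodic2v (v : E2 → E2) : Prop := ∀ (x : E2) (k : Fin 2 → ℤ), v (x + per2 k) = v x

def Periodic2s (θ : E2 → ℝ) : Prop := ∀ (x : E2) (k : Fin 2 → ℤ), θ (x + per2 k) = θ x

def box2 : Set E2 := {x | ∀ i, x i ∈ Set.Ico (0 : ℝ) 1}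

def l2sq2v (v : E2 → E2) : ℝ := ∫ x in box2, ‖v x‖ ^ 2

def l2sq2s (θ : E2 → ℝ) : ℝ := ∫ x in box2, (θ x) ^ 2

def l2norm2s (θ : E2 → ℝ) : ℝ := Real.sqrt (l2sq2s θ)

def gradsq2v (v : E2 → E2) : ℝ := ∫ x in box2, ∑ i, ‖fderiv ℝ v x (e2 i)‖ ^ 2

def gradsq2s (θ : E2 → ℝ) : ℝ := ∫ x in box2, ‖fderiv ℝ θ x‖ ^ 2

def DivFree2 (v : E2 → E2) : Prop := ∀ x, ∑ i, ⟪fderiv ℝ v x (e2 i), e2 i⟫ = 0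

def lap2s (θ : E2 → ℝ) (x : E2) : ℝ :=
  ∑ i, fderiv ℝ (fun y => fderiv ℝ θ y (e2 i)) x (e2 i)

def SpaceTimeSmooth2v (v : ℝ → E2 → E2) : Prop := ContDiff ℝ (⊤ : ℕ∞) (Function.uncurry v)

def SpaceTimeSmooth2s (θ : ℝ → E2 → ℝ) : Prop := ContDiff ℝ (⊤ : ℕ∞) (Function.uncurry θ)

/-- Weak (distributional) solution of the transport equation `∂ₜ θ + v ⬝ ∇θ = 0` on `(T₁,T₂)`. -/
def IsWeakTransport (T₁ T₂ : ℝ) (v : ℝ → E2 → E2) (θ : ℝ → E2 → ℝ) : Prop :=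
  ∀ φ : ℝ → E2 → ℝ, SpaceTimeSmooth2s φ → (∀ t, Periodic2s (φ t)) →
    (∃ K : Set ℝ, IsCompact K ∧ K ⊆ Set.Ioo T₁ T₂ ∧ ∀ t ∉ K, φ t = 0) →
    ∫ t in Set.Ioo T₁ T₂, ∫ x in box2,
      θ t x * (deriv (fun s => φ s x) t + fderiv ℝ (φ t) x (v t x)) = 0

/-- classical advection-diffusion equation with diffusivity ν and drift v, on times in I. -/
def IsAdvDiff (ν : ℝ) (I : Set ℝ) (v : ℝ → E2 → E2) (θ : ℝ → E2 → ℝ) : Prop :=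
  ∀ t ∈ I, ∀ x, deriv (fun s => θ s x) t + fderiv ℝ (θ t) x (v t x) = ν * lap2s (θ t) x

def knorm2 (k : Fin 2 → ℤ) : ℝ := Real.sqrt (∑ i, ((k i : ℝ)) ^ 2)

/-- projection onto Fourier modes with frequency above Λ (unit torus 𝕋²). -/
def Phigh (Λ : ℝ) (w : E2 → ℝ) : E2 → ℝ := fun x =>
  ∑' k : Fin 2 → ℤ,
    if Λ < knorm2 k then
      (∫ y in box2, w y * Real.cos (2 * π * ∑ i, (k i : ℝ) * ⟪x - y, e2 i⟫))
    else 0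


namespace TAD
open Function

abbrev P2 := Fin 2 → ℝ

def mE : E2 ≃ᵐ P2 := (MeasurableEquiv.toLp 2 (Fin 2 → ℝ)).symm

lemma mp_mE : MeasurePreserving (mE) volume volume :=
  EuclideanSpace.volume_preserving_symm_measurableEquiv_toLp _

lemma mE_apply (x : E2) (i : Fin 2) : mE x i = x i := rfl

lemma mE_symm_apply (y : P2) (i : Fin 2) : (mE.symm y) i = y i := rfl

def K2 : Set E2 := {x | ∀ i, x i ∈ Set.Icc (0 : ℝ) 1}

lemma K2_eq_preimage : K2 = mE ⁻¹' (Set.Icc 0 1 : Set P2) := by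
  ext x
  simp only [K2, Set.mem_setOf_eq, Set.mem_preimage, Set.mem_Icc, Pi.le_def, mE_apply, Pi.zero_apply, Pi.one_apply]
  constructor
  · intro h; exact ⟨fun i => (h i).1, fun i => (h i).2⟩
  · intro h i; exact ⟨h.1 i, h.2 i⟩

lemma box2_eq_preimage' : box2 = mE ⁻¹' (Set.univ.pi fun _ => Set.Ico (0:ℝ) 1) := by
  ext x; simp [box2, Set.mem_pi, mE_apply]

lemma box2_subset_K2 : box2 ⊆ K2 := fun x hx i => ⟨(hx i).1, (hx i).2.le⟩

lemma isCompact_K2 : IsCompact K2 := by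
  have : K2 = (PiLp.continuousLinearEquiv 2 ℝ (fun _ : Fin 2 => ℝ)).symm '' (Set.Icc 0 1) := by
    rw [K2_eq_preimage]
    ext x
    constructor
    · intro hx; exact ⟨mE x, hx, rfl⟩
    · rintro ⟨y, hy, rfl⟩; exact hy
  rw [this]
  exact isCompact_Icc.image (PiLp.continuousLinearEquiv 2 ℝ _).symm.continuous

lemma measurableSet_box2 : MeasurableSet box2 := by
  rw [box2_eq_preimage']
  exact mE.measurable (MeasurableSet.univ_pi fun i => measurableSet_Ico)

lemma box2_ae_eq_K2 : box2 =ᵐ[volume] K2 := by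
  rw [box2_eq_preimage', K2_eq_preimage]
  have h : (Set.univ.pi fun _ : Fin 2 => Set.Ico (0:ℝ) 1) =ᵐ[volume] (Set.Icc 0 1 : Set P2) :=
    Measure.univ_pi_Ico_ae_eq_Icc
  exact mp_mE.quasiMeasurePreserving.preimage_ae_eq h

lemma integrableOn_box2 {g : E2 → ℝ} (hg : Continuous g) : IntegrableOn g box2 :=
  (hg.continuousOn.integrableOn_compact isCompact_K2).mono_set box2_subset_K2

lemma integral_box2_transfer (g : E2 → ℝ) :
    ∫ x in box2, g x = ∫ y in Set.Icc (0:P2) 1, g (mE.symm y) := by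
  rw [setIntegral_congr_set box2_ae_eq_K2, K2_eq_preimage]
  rw [← mp_mE.setIntegral_preimage_emb mE.measurableEmbedding (fun y => g (mE.symm y))]
  simp

end TAD
namespace TAD
open Function

def L2P : E2 ≃L[ℝ] P2 := PiLp.continuousLinearEquiv 2 ℝ (fun _ : Fin 2 => ℝ)

lemma L2P_apply (x : E2) : L2P x = mE x := rfl
lemma L2P_symm_apply (y : P2) : L2P.symm y = mE.symm y := rfl

lemma L2P_symm_single (i : Fin 2) : L2P.symm (Pi.single i 1) = e2 i := rfl

lemma insertNth_one_eq (i : Fin 2) (x : Fin 1 → ℝ) :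
    i.insertNth (1:ℝ) x = i.insertNth (0:ℝ) x + (Pi.single i 1 : P2) := by
  funext j
  rcases eq_or_ne j i with rfl | hj
  · simp
  · rcases Fin.exists_succAbove_eq hj with ⟨k, rfl⟩
    simp [Fin.insertNth_apply_succAbove, Pi.single_eq_of_ne (Fin.succAbove_ne i k)]

lemma mE_symm_add (a b : P2) : mE.symm (a + b) = mE.symm a + mE.symm b := rfl

lemma mE_symm_single_eq_per2 (i : Fin 2) :
    mE.symm (Pi.single i (1:ℝ)) = per2 (Pi.single i 1) := by
  ext j
  rcases eq_or_ne j i with rfl | hj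
  · simp [mE_symm_apply, per2]
  · simp [mE_symm_apply, per2, Pi.single_eq_of_ne hj]

/-- Divergence theorem on the unit torus: the integral of the divergence of a smooth periodic
vector field over the fundamental domain vanishes. -/
lemma integral_div_eq_zero (F : E2 → E2) (hF : ContDiff ℝ (⊤ : ℕ∞) F) (hper : Periodic2v F) :
    ∫ x in box2, ∑ i, fderiv ℝ F x (e2 i) i = 0 := by
  classical
  set g : P2 → P2 := fun y => L2P (F (L2P.symm y)) with hg
  have hgc : ContDiff ℝ (⊤ : ℕ∞) g :=
    (L2P.contDiff.comp hF).comp L2P.symm.contDiff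
  set g' : P2 → P2 →L[ℝ] P2 := fun y =>
    ((L2P.toContinuousLinearMap.comp (fderiv ℝ F (L2P.symm y))).comp
      L2P.symm.toContinuousLinearMap) with hg'
  have hd : ∀ y : P2, HasFDerivAt g (g' y) y := by
    intro y
    have h1 : HasFDerivAt F (fderiv ℝ F (L2P.symm y)) (L2P.symm y) :=
      (hF.differentiable (by simp) _).hasFDerivAt
    exact (L2P.hasFDerivAt.comp _ (h1.comp _ L2P.symm.hasFDerivAt) : _)
  have hgd : ∀ y (i : Fin 2), g' y (Pi.single i 1) i = fderiv ℝ F (L2P.symm y) (e2 i) i := by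
    intro y i
    simp only [hg', ContinuousLinearMap.coe_comp', comp_apply,
      ContinuousLinearEquiv.coe_coe, L2P_symm_single]
    rfl
  have key := MeasureTheory.integral_divergence_of_hasFDerivAt_off_countable
    (0 : P2) 1 (fun i => zero_le_one) g g' ∅ Set.countable_empty
    hgc.continuous.continuousOn (fun x _ => hd x) ?_
  · rw [integral_box2_transfer]
    have heq : ∀ y : P2, (∑ i, fderiv ℝ F (mE.symm y) (e2 i) i) = ∑ i, g' y (Pi.single i 1) i := by
      intro y; exact Finset.sum_congr rfl fun i _ => (hgd y i).symm
    rw [MeasureTheory.setIntegral_congr_fun measurableSet_Icc (fun y _ => heq y)]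
    rw [key]
    apply Finset.sum_eq_zero
    intro i _
    have hz : ∀ x : Fin 1 → ℝ, g (i.insertNth ((1:P2) i) x) i = g (i.insertNth ((0:P2) i) x) i := by
      intro x
      show g (i.insertNth (1:ℝ) x) i = g (i.insertNth (0:ℝ) x) i
      rw [insertNth_one_eq]
      show (F (L2P.symm _) : E2) i = (F (L2P.symm _) : E2) i
      rw [show L2P.symm (i.insertNth (0:ℝ) x + (Pi.single i 1 : P2))
            = L2P.symm (i.insertNth (0:ℝ) x) + per2 (Pi.single i 1) by
        rw [L2P_symm_apply, L2P_symm_apply, mE_symm_add, mE_symm_single_eq_per2]]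
      rw [hper]
    simp only [hz, sub_self]
  · have hc : Continuous fun y : P2 => ∑ i, g' y (Pi.single i 1) i := by
      apply continuous_finset_sum
      intro i _
      have h1 : Continuous fun y : P2 => fderiv ℝ F (L2P.symm y) :=
        (hF.continuous_fderiv (by simp)).comp L2P.symm.continuous
      have h2 : Continuous fun y : P2 => fderiv ℝ F (L2P.symm y) (e2 i) :=
        h1.clm_apply continuous_const
      have h3 : Continuous fun y : P2 => (fderiv ℝ F (L2P.symm y) (e2 i) : E2) i :=
        (continuous_apply i).comp (L2P.continuous.comp h2)
      exact h3.congr fun y => (hgd y i).symm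
    exact hc.continuousOn.integrableOn_compact isCompact_Icc

end TAD
namespace TAD
open Function

lemma mc_top {n : ℕ∞} : (n : WithTop ℕ∞) ≤ ((⊤ : ℕ∞) : WithTop ℕ∞) := by
  exact_mod_cast le_top

lemma mc_ne : ((⊤ : ℕ∞) : WithTop ℕ∞) ≠ 0 := by simp

/-- fderiv of a periodic function is periodic. -/
lemma periodic_fderiv {G : Type*} [NormedAddCommGroup G] [NormedSpace ℝ G] {f : E2 → G}
    (hf : Differentiable ℝ f) (hper : ∀ x k, f (x + per2 k) = f x) (x : E2) (k : Fin 2 → ℤ) :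
    fderiv ℝ f (x + per2 k) = fderiv ℝ f x := by
  have h : (fun y => f (y + per2 k)) = f := funext fun y => hper y k
  have h2 : HasFDerivAt (fun y => f (y + per2 k))
      ((fderiv ℝ f (x + per2 k)).comp (ContinuousLinearMap.id ℝ E2)) x :=
    (hf (x + per2 k)).hasFDerivAt.comp x ((hasFDerivAt_id x).add_const (per2 k))
  rw [h, ContinuousLinearMap.comp_id] at h2
  exact (h2.fderiv).symm

lemma slice_contDiff {f : ℝ → E2 → ℝ} (hf : ContDiff ℝ (⊤ : ℕ∞) (uncurry f)) (t : ℝ) :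
    ContDiff ℝ (⊤ : ℕ∞) (f t) :=
  hf.comp (contDiff_const.prodMk contDiff_id)

lemma slice_contDiff_v {f : ℝ → E2 → E2} (hf : ContDiff ℝ (⊤ : ℕ∞) (uncurry f)) (t : ℝ) :
    ContDiff ℝ (⊤ : ℕ∞) (f t) :=
  hf.comp (contDiff_const.prodMk contDiff_id)

lemma hasFDerivAt_slice {f : ℝ → E2 → ℝ} (hf : ContDiff ℝ (⊤ : ℕ∞) (uncurry f)) (t : ℝ) (x : E2) :
    HasFDerivAt (f t) ((fderiv ℝ (uncurry f) (t, x)).comp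
      (ContinuousLinearMap.inr ℝ ℝ E2)) x :=
  ((hf.differentiable mc_ne (t, x)).hasFDerivAt).comp x (hasFDerivAt_prodMk_right t x)

lemma fderiv_slice {f : ℝ → E2 → ℝ} (hf : ContDiff ℝ (⊤ : ℕ∞) (uncurry f)) (t : ℝ) (x : E2) :
    fderiv ℝ (f t) x = (fderiv ℝ (uncurry f) (t, x)).comp (ContinuousLinearMap.inr ℝ ℝ E2) :=
  (hasFDerivAt_slice hf t x).fderiv

lemma hasDerivAt_slice {f : ℝ → E2 → ℝ} (hf : ContDiff ℝ (⊤ : ℕ∞) (uncurry f)) (t : ℝ) (x : E2) :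
    HasDerivAt (fun s => f s x) (fderiv ℝ (uncurry f) (t, x) (1, 0)) t := by
  have h1 : HasDerivAt (fun s : ℝ => (s, x)) ((1 : ℝ), (0 : E2)) t :=
    (hasDerivAt_id t).prodMk (hasDerivAt_const t x)
  exact ((hf.differentiable mc_ne (t, x)).hasFDerivAt).comp_hasDerivAt t h1

lemma deriv_slice {f : ℝ → E2 → ℝ} (hf : ContDiff ℝ (⊤ : ℕ∞) (uncurry f)) (t : ℝ) (x : E2) :
    deriv (fun s => f s x) t = fderiv ℝ (uncurry f) (t, x) (1, 0) :=
  (hasDerivAt_slice hf t x).deriv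

lemma continuous_deriv_slice {f : ℝ → E2 → ℝ} (hf : ContDiff ℝ (⊤ : ℕ∞) (uncurry f)) :
    Continuous fun p : ℝ × E2 => deriv (fun s => f s p.2) p.1 := by
  have h : Continuous fun p : ℝ × E2 => fderiv ℝ (uncurry f) p (1, 0) :=
    (hf.continuous_fderiv mc_ne).clm_apply continuous_const
  exact h.congr fun p => (deriv_slice hf p.1 p.2).symm

lemma continuous_fderiv_slice {f : ℝ → E2 → ℝ} (hf : ContDiff ℝ (⊤ : ℕ∞) (uncurry f)) :
    Continuous fun p : ℝ × E2 => fderiv ℝ (f p.1) p.2 := by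
  have h : Continuous fun p : ℝ × E2 =>
      (fderiv ℝ (uncurry f) p).comp (ContinuousLinearMap.inr ℝ ℝ E2) :=
    (hf.continuous_fderiv mc_ne).clm_comp continuous_const
  exact h.congr fun p => (fderiv_slice hf p.1 p.2).symm

/-- expansion of a continuous linear functional in coordinates -/
lemma clm_apply_eq_sum (L : E2 →L[ℝ] ℝ) (y : E2) : L y = ∑ i, y i * L (e2 i) := by
  have hy : y = ∑ i, y i • e2 i := by
    ext j
    have : (∑ i, y i • e2 i) j = ∑ i, y i • ((e2 i : E2) j) := by
      rw [WithLp.ofLp_sum, Finset.sum_apply]; rfl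
    rw [this]
    simp [e2, EuclideanSpace.single_apply]
  conv_lhs => rw [hy]
  rw [map_sum]
  exact Finset.sum_congr rfl fun i _ => by rw [L.map_smul]; rfl

lemma inner_eq_sum (a b : E2) : ⟪a, b⟫ = ∑ i, a i * b i := by
  simp [PiLp.inner_apply, RCLike.inner_apply, mul_comm]

lemma dualVec_spec (L : E2 →L[ℝ] ℝ) (i : Fin 2) :
    ((InnerProductSpace.toDual ℝ E2).symm L : E2) i = L (e2 i) := by
  have h1 : ⟪(InnerProductSpace.toDual ℝ E2).symm L, e2 i⟫ = L (e2 i) :=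
    InnerProductSpace.toDual_symm_apply
  have h2 : ⟪(InnerProductSpace.toDual ℝ E2).symm L, e2 i⟫ =
      ((InnerProductSpace.toDual ℝ E2).symm L : E2) i := by
    rw [e2, EuclideanSpace.inner_single_right]
    simp
  exact h2.symm.trans h1

lemma opnorm_sq_eq (L : E2 →L[ℝ] ℝ) : ‖L‖ ^ 2 = ∑ i, (L (e2 i)) ^ 2 := by
  have hnorm : ‖L‖ = ‖((InnerProductSpace.toDual ℝ E2).symm L : E2)‖ :=
    (LinearIsometryEquiv.norm_map _ L).symm
  rw [hnorm, ← real_inner_self_eq_norm_sq, inner_eq_sum]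
  exact Finset.sum_congr rfl fun i _ => by rw [dualVec_spec, sq]

lemma sum_mul_le_opnorm (L M : E2 →L[ℝ] ℝ) :
    ∑ i, L (e2 i) * M (e2 i) ≤ ‖L‖ * ‖M‖ := by
  have h1 : ∑ i, L (e2 i) * M (e2 i) =
      ⟪((InnerProductSpace.toDual ℝ E2).symm L : E2),
        ((InnerProductSpace.toDual ℝ E2).symm M : E2)⟫ := by
    rw [inner_eq_sum]
    exact (Finset.sum_congr rfl fun i _ => by rw [dualVec_spec, dualVec_spec]).symm
  rw [h1]
  calc ⟪((InnerProductSpace.toDual ℝ E2).symm L : E2),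
        ((InnerProductSpace.toDual ℝ E2).symm M : E2)⟫
      ≤ ‖((InnerProductSpace.toDual ℝ E2).symm L : E2)‖ *
        ‖((InnerProductSpace.toDual ℝ E2).symm M : E2)‖ := real_inner_le_norm _ _
  _ = ‖L‖ * ‖M‖ := by rw [LinearIsometryEquiv.norm_map, LinearIsometryEquiv.norm_map]

/-- Cauchy-Schwarz for set integrals of nonnegative functions. -/
lemma integral_CS {α : Type*} [MeasurableSpace α] (μ : Measure α) (f g : α → ℝ)
    (hfm : AEStronglyMeasurable f μ) (hgm : AEStronglyMeasurable g μ)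
    (hf : Integrable (fun x => f x ^ 2) μ) (hg : Integrable (fun x => g x ^ 2) μ)
    (hfn : 0 ≤ᵐ[μ] f) (hgn : 0 ≤ᵐ[μ] g) :
    ∫ x, f x * g x ∂μ ≤ Real.sqrt (∫ x, f x ^ 2 ∂μ) * Real.sqrt (∫ x, g x ^ 2 ∂μ) := by
  have hpq : Real.HolderConjugate 2 2 := Real.HolderConjugate.two_two
  have hf2 : MemLp f (ENNReal.ofReal 2) μ := by
    rw [show ENNReal.ofReal 2 = 2 by norm_num]
    exact (memLp_two_iff_integrable_sq hfm).mpr hf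
  have hg2 : MemLp g (ENNReal.ofReal 2) μ := by
    rw [show ENNReal.ofReal 2 = 2 by norm_num]
    exact (memLp_two_iff_integrable_sq hgm).mpr hg
  have := MeasureTheory.integral_mul_le_Lp_mul_Lq_of_nonneg hpq hfn hgn hf2 hg2
  calc ∫ x, f x * g x ∂μ ≤ (∫ x, f x ^ (2:ℝ) ∂μ) ^ ((1:ℝ)/2) * (∫ x, g x ^ (2:ℝ) ∂μ) ^ ((1:ℝ)/2) :=
        this
  _ = Real.sqrt (∫ x, f x ^ 2 ∂μ) * Real.sqrt (∫ x, g x ^ 2 ∂μ) := by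
      rw [Real.sqrt_eq_rpow, Real.sqrt_eq_rpow]
      congr 2 <;> · apply integral_congr_ae; filter_upwards with x;
                    rw [show ((2:ℝ)) = ((2:ℕ):ℝ) by norm_num, Real.rpow_natCast]

end TAD
namespace TAD
open Function Metric

lemma volume_box2_lt_top : volume box2 < ⊤ :=
  lt_of_le_of_lt (measure_mono box2_subset_K2) isCompact_K2.measure_lt_top

/-- uniform bound for jointly continuous functions on a time-interval times the box -/
lemma exists_bound_on (g : ℝ → E2 → ℝ) (hg : Continuous (uncurry g)) (t : ℝ) :
    ∃ C : ℝ, ∀ s ∈ Set.Icc (t - 1) (t + 1), ∀ x ∈ K2, ‖g s x‖ ≤ C := by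
  obtain ⟨C, hC⟩ := ((isCompact_Icc (a := t - 1) (b := t + 1)).prod
    isCompact_K2).exists_bound_of_continuousOn hg.continuousOn
  exact ⟨C, fun s hs x hx => hC (s, x) ⟨hs, hx⟩⟩

lemma continuous_integral_box {g : ℝ → E2 → ℝ} (hg : Continuous (uncurry g)) :
    Continuous fun t => ∫ x in box2, g t x := by
  rw [continuous_iff_continuousAt]
  intro t
  obtain ⟨C, hC⟩ := exists_bound_on g hg t
  apply continuousAt_of_dominated (bound := fun _ => C)
  · filter_upwards with s
    exact ((hg.comp (continuous_const.prodMk continuous_id)).aestronglyMeasurable :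
      AEStronglyMeasurable (g s) _).restrict
  · have hmem : Set.Ioo (t - 1) (t + 1) ∈ 𝓝 t :=
      Ioo_mem_nhds (by linarith) (by linarith)
    filter_upwards [hmem] with s hs
    rw [ae_restrict_iff' measurableSet_box2]
    filter_upwards with x hx
    exact hC s ⟨hs.1.le, hs.2.le⟩ x (box2_subset_K2 hx)
  · exact integrableOn_const volume_box2_lt_top.ne
  · filter_upwards with x
    exact (hg.comp (continuous_id.prodMk continuous_const)).continuousAt

lemma hasDerivAt_integral_box {f : ℝ → E2 → ℝ} (hf : ContDiff ℝ (⊤ : ℕ∞) (uncurry f)) (t : ℝ) :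
    HasDerivAt (fun s => ∫ x in box2, f s x)
      (∫ x in box2, deriv (fun s => f s x) t) t := by
  obtain ⟨C, hC⟩ := exists_bound_on (fun s x => deriv (fun τ => f τ x) s)
    (continuous_deriv_slice hf) t
  have key := hasDerivAt_integral_of_dominated_loc_of_deriv_le
    (F := fun s => f s) (F' := fun s x => deriv (fun τ => f τ x) s)
    (μ := volume.restrict box2) (x₀ := t) (bound := fun _ => C)
    (s := Metric.ball t 1) (Metric.ball_mem_nhds t zero_lt_one)
    ?_ ?_ ?_ ?_ ?_ ?_
  · exact key.2
  · filter_upwards with s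
    exact ((hf.continuous.comp (continuous_const.prodMk continuous_id)).aestronglyMeasurable :
      AEStronglyMeasurable (f s) _).restrict
  · exact integrableOn_box2 (hf.continuous.comp (continuous_const.prodMk continuous_id))
  · exact (((continuous_deriv_slice hf).comp
      (continuous_const.prodMk continuous_id)).aestronglyMeasurable :
      AEStronglyMeasurable _ _).restrict
  · rw [ae_restrict_iff' measurableSet_box2]
    filter_upwards with x hx
    intro s hs
    have hs' : s ∈ Set.Icc (t - 1) (t + 1) := by
      have := mem_ball_iff_norm.mp hs
      constructor <;> [linarith [neg_le_of_abs_le this.le]; linarith [le_of_abs_le this.le]]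
    exact hC s hs' x (box2_subset_K2 hx)
  · exact integrableOn_const volume_box2_lt_top.ne
  · filter_upwards with x
    intro s _
    exact hasDerivAt_slice hf s x |>.congr_deriv (deriv_slice hf s x).symm

end TAD
namespace TAD
open Function

lemma inner_e2_right (a : E2) (i : Fin 2) : ⟪a, e2 i⟫ = a i := by
  rw [e2, EuclideanSpace.inner_single_right]; simp

/-- divergence of `u • V` in coordinates -/
lemma div_smul_eq (u : E2 → ℝ) (V : E2 → E2)
    (hu : ContDiff ℝ (⊤ : ℕ∞) u) (hV : ContDiff ℝ (⊤ : ℕ∞) V) (x : E2) :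
    ∑ i, (fderiv ℝ (fun y => u y • V y) x (e2 i) : E2) i =
      u x * (∑ i, (fderiv ℝ V x (e2 i) : E2) i) + fderiv ℝ u x (V x) := by
  have hF : HasFDerivAt (fun y => u y • V y)
      (u x • fderiv ℝ V x + (fderiv ℝ u x).smulRight (V x)) x :=
    ((hu.differentiable mc_ne x).hasFDerivAt).smul ((hV.differentiable mc_ne x).hasFDerivAt)
  rw [hF.fderiv]
  have hcoord : ∀ i, ((u x • fderiv ℝ V x + (fderiv ℝ u x).smulRight (V x)) (e2 i) : E2) i
      = u x * (fderiv ℝ V x (e2 i) : E2) i + fderiv ℝ u x (e2 i) * (V x : E2) i := by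
    intro i
    rfl
  rw [Finset.sum_congr rfl fun i _ => hcoord i, Finset.sum_add_distrib, ← Finset.mul_sum]
  congr 1
  rw [clm_apply_eq_sum (fderiv ℝ u x) (V x)]
  exact Finset.sum_congr rfl fun i _ => mul_comm _ _

lemma periodic_smul {u : E2 → ℝ} {V : E2 → E2} (hu : Periodic2s u) (hV : Periodic2v V) :
    Periodic2v (fun y => u y • V y) := fun x k => by simp [hu x k, hV x k]

/-- IBP along a divergence-free field -/
lemma integral_fderiv_along_divfree (u : E2 → ℝ) (V : E2 → E2)
    (hu : ContDiff ℝ (⊤ : ℕ∞) u) (hV : ContDiff ℝ (⊤ : ℕ∞) V)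
    (huper : Periodic2s u) (hVper : Periodic2v V) (hdf : DivFree2 V) :
    ∫ x in box2, fderiv ℝ u x (V x) = 0 := by
  have key := integral_div_eq_zero (fun y => u y • V y)
    (hu.smul hV) (periodic_smul huper hVper)
  have hpt : ∀ x : E2, ∑ i, (fderiv ℝ (fun y => u y • V y) x (e2 i) : E2) i
      = fderiv ℝ u x (V x) := by
    intro x
    rw [div_smul_eq u V hu hV x]
    have h0 : (∑ i, (fderiv ℝ V x (e2 i) : E2) i) = 0 := by
      rw [← hdf x]
      exact Finset.sum_congr rfl fun i _ => (inner_e2_right _ i).symm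
    rw [h0, mul_zero, zero_add]
  rw [← setIntegral_congr_fun measurableSet_box2 (fun x _ => hpt x)]
  exact key

/-- the gradient vector field of a smooth function -/
def grad2 (θ : E2 → ℝ) (x : E2) : E2 := WithLp.toLp 2 (fun i => fderiv ℝ θ x (e2 i))

lemma grad2_contDiff {θ : E2 → ℝ} (hθ : ContDiff ℝ (⊤ : ℕ∞) θ) :
    ContDiff ℝ (⊤ : ℕ∞) (grad2 θ) := by
  have h : ContDiff ℝ (⊤ : ℕ∞) fun x => (fun i => fderiv ℝ θ x (e2 i) : P2) :=
    contDiff_pi.mpr fun i => (hθ.fderiv_right mc_top).clm_apply contDiff_const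
  exact L2P.symm.contDiff.comp h

lemma grad2_periodic {θ : E2 → ℝ} (hθ : ContDiff ℝ (⊤ : ℕ∞) θ) (hper : Periodic2s θ) :
    Periodic2v (grad2 θ) := by
  intro x k
  ext i
  show fderiv ℝ θ (x + per2 k) (e2 i) = fderiv ℝ θ x (e2 i)
  rw [periodic_fderiv (hθ.differentiable mc_ne) (fun y m => hper y m) x k]

lemma grad2_coord (θ : E2 → ℝ) (x : E2) (i : Fin 2) :
    (grad2 θ x : E2) i = fderiv ℝ θ x (e2 i) := rfl

lemma fderiv_grad2_coord {θ : E2 → ℝ} (hθ : ContDiff ℝ (⊤ : ℕ∞) θ) (x : E2) (i : Fin 2) :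
    (fderiv ℝ (grad2 θ) x (e2 i) : E2) i
      = fderiv ℝ (fun y => fderiv ℝ θ y (e2 i)) x (e2 i) := by
  have heq : (fun y => fderiv ℝ θ y (e2 i)) = fun y => (EuclideanSpace.proj i) (grad2 θ y) :=
    funext fun y => rfl
  rw [heq]
  have hd := ((grad2_contDiff hθ).differentiable mc_ne x).hasFDerivAt
  have hd2 := ((EuclideanSpace.proj (𝕜 := ℝ) i : E2 →L[ℝ] ℝ).hasFDerivAt).comp x hd
  rw [show (fun y => (EuclideanSpace.proj (𝕜 := ℝ) i) (grad2 θ y))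
      = (⇑(EuclideanSpace.proj (𝕜 := ℝ) i) ∘ grad2 θ) from rfl, hd2.fderiv]
  rfl

/-- integration by parts for the Laplacian against a periodic test function -/
lemma integral_mul_lap (u θ : E2 → ℝ)
    (hu : ContDiff ℝ (⊤ : ℕ∞) u) (hθ : ContDiff ℝ (⊤ : ℕ∞) θ)
    (huper : Periodic2s u) (hθper : Periodic2s θ) :
    ∫ x in box2,
      (u x * lap2s θ x + ∑ i, fderiv ℝ u x (e2 i) * fderiv ℝ θ x (e2 i)) = 0 := by
  have key := integral_div_eq_zero (fun y => u y • grad2 θ y)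
    (hu.smul (grad2_contDiff hθ)) (periodic_smul huper (grad2_periodic hθ hθper))
  have hpt : ∀ x : E2, ∑ i, (fderiv ℝ (fun y => u y • grad2 θ y) x (e2 i) : E2) i
      = u x * lap2s θ x + ∑ i, fderiv ℝ u x (e2 i) * fderiv ℝ θ x (e2 i) := by
    intro x
    rw [div_smul_eq u (grad2 θ) hu (grad2_contDiff hθ) x]
    congr 1
    · congr 1
      rw [lap2s]
      exact Finset.sum_congr rfl fun i _ => fderiv_grad2_coord hθ x i
    · rw [clm_apply_eq_sum (fderiv ℝ u x) (grad2 θ x)]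
      exact Finset.sum_congr rfl fun i _ => by rw [grad2_coord, mul_comm]
  rw [← setIntegral_congr_fun measurableSet_box2 (fun x _ => hpt x)]
  exact key

end TAD
namespace TAD
open Function

lemma continuous_lap2s {θ : E2 → ℝ} (hθ : ContDiff ℝ (⊤ : ℕ∞) θ) : Continuous (lap2s θ) := by
  apply continuous_finset_sum
  intro i _
  have h1 : ContDiff ℝ (⊤ : ℕ∞) (fun y => fderiv ℝ θ y (e2 i)) :=
    (hθ.fderiv_right mc_top).clm_apply contDiff_const
  exact (h1.continuous_fderiv mc_ne).clm_apply continuous_const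

/-- Main energy computation: derivative of the squared L² norm along the evolution
`∂ₜ u = a Δg − v ⬝ ∇u`. -/
lemma energy_deriv (a : ℝ) (v : ℝ → E2 → E2) (u g : ℝ → E2 → ℝ)
    (hv : SpaceTimeSmooth2v v) (hu : SpaceTimeSmooth2s u) (hg : SpaceTimeSmooth2s g)
    (hvper : ∀ t, Periodic2v (v t)) (huper : ∀ t, Periodic2s (u t))
    (hgper : ∀ t, Periodic2s (g t)) (hdf : ∀ t, DivFree2 (v t)) (t : ℝ)
    (heq : ∀ x, deriv (fun s => u s x) t = a * lap2s (g t) x - fderiv ℝ (u t) x (v t x)) :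
    HasDerivAt (fun s => l2sq2s (u s))
      (-2 * a * ∫ x in box2,
        ∑ i, fderiv ℝ (u t) x (e2 i) * fderiv ℝ (g t) x (e2 i)) t := by
  have hut : ContDiff ℝ (⊤ : ℕ∞) (u t) := slice_contDiff hu t
  have hgt : ContDiff ℝ (⊤ : ℕ∞) (g t) := slice_contDiff hg t
  have hvt : ContDiff ℝ (⊤ : ℕ∞) (v t) := slice_contDiff_v hv t
  have husq : ContDiff ℝ (⊤ : ℕ∞) (uncurry (fun s x => u s x ^ 2)) := by
    have h : uncurry (fun s x => u s x ^ 2) = fun p => (uncurry u p) ^ 2 := rfl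
    rw [h]; exact hu.pow 2
  have hD := hasDerivAt_integral_box husq t
  -- pointwise form of the time derivative of the square
  have hpt : ∀ x : E2, deriv (fun s => u s x ^ 2) t
      = 2 * u t x * (a * lap2s (g t) x - fderiv ℝ (u t) x (v t x)) := by
    intro x
    have h1 : HasDerivAt (fun s => u s x) (deriv (fun s => u s x) t) t :=
      (hasDerivAt_slice hu t x).congr_deriv (deriv_slice hu t x).symm
    have h2 : HasDerivAt (fun s => u s x ^ 2) _ t := h1.pow 2
    rw [h2.deriv, heq x]
    push_cast
    ring
  -- abbreviations
  set A1 : E2 → ℝ := fun x => u t x * lap2s (g t) x with hA1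
  set A2 : E2 → ℝ := fun x => ∑ i, fderiv ℝ (u t) x (e2 i) * fderiv ℝ (g t) x (e2 i) with hA2
  set A3 : E2 → ℝ := fun x => u t x * fderiv ℝ (u t) x (v t x) with hA3
  have cont_fdu : Continuous fun x => fderiv ℝ (u t) x := hut.continuous_fderiv mc_ne
  have cont_fdg : Continuous fun x => fderiv ℝ (g t) x := hgt.continuous_fderiv mc_ne
  have cont_A1 : Continuous A1 := hut.continuous.mul (continuous_lap2s hgt)
  have cont_A2 : Continuous A2 := by
    apply continuous_finset_sum
    intro i _
    exact (cont_fdu.clm_apply continuous_const).mul (cont_fdg.clm_apply continuous_const)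
  have cont_A3 : Continuous A3 :=
    hut.continuous.mul (cont_fdu.clm_apply hvt.continuous)
  -- derivative of 2*a*u slices
  have hfd1 : ∀ (x : E2) (i : Fin 2), fderiv ℝ (fun y => 2 * a * u t y) x (e2 i)
      = 2 * a * fderiv ℝ (u t) x (e2 i) := by
    intro x i
    rw [fderiv_const_mul (hut.differentiable mc_ne x) (2 * a)]
    rfl
  have hfd2 : ∀ x : E2, fderiv ℝ (fun y => u t y ^ 2) x (v t x)
      = 2 * u t x * fderiv ℝ (u t) x (v t x) := by
    intro x
    have hsq : (fun y => u t y ^ 2) = fun y => u t y * u t y := funext fun y => sq (u t y)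
    rw [hsq, fderiv_fun_mul (hut.differentiable mc_ne x) (hut.differentiable mc_ne x)]
    simp only [ContinuousLinearMap.add_apply, ContinuousLinearMap.smul_apply, smul_eq_mul]
    ring
  -- the two integration-by-parts identities
  have hQ12 : ∫ x in box2, (2 * a * A1 x + 2 * a * A2 x) = 0 := by
    have key := integral_mul_lap (fun y => 2 * a * u t y) (g t)
      (contDiff_const.mul hut) hgt (fun x k => by simp [huper t x k]) (hgper t)
    rw [← key]
    apply setIntegral_congr_fun measurableSet_box2
    intro x _
    simp only [hfd1]
    show 2 * a * A1 x + 2 * a * A2 x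
        = (2 * a * u t x) * lap2s (g t) x
        + (∑ i, 2 * a * fderiv ℝ (u t) x (e2 i) * fderiv ℝ (g t) x (e2 i))
    simp only [hA1, hA2, Finset.mul_sum]
    congr 1
    · ring
    · exact Finset.sum_congr rfl fun i _ => by ring
  have hQ3 : ∫ x in box2, 2 * A3 x = 0 := by
    have key := integral_fderiv_along_divfree (fun y => u t y ^ 2) (v t)
      (hut.pow 2) hvt (fun x k => by simp [huper t x k]) (hvper t) (hdf t)
    rw [← key]
    apply setIntegral_congr_fun measurableSet_box2
    intro x _
    show 2 * A3 x = fderiv ℝ (fun y => u t y ^ 2) x (v t x)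
    rw [hfd2 x, hA3]
    ring
  -- compute the integral of the pointwise derivative
  have hint : ∫ x in box2, deriv (fun s => u s x ^ 2) t
      = -2 * a * ∫ x in box2, A2 x := by
    rw [setIntegral_congr_fun measurableSet_box2 (fun x _ => hpt x)]
    have hsp : ∀ x : E2, 2 * u t x * (a * lap2s (g t) x - fderiv ℝ (u t) x (v t x))
        = (2 * a * A1 x + 2 * a * A2 x) - 2 * a * A2 x - 2 * A3 x := by
      intro x
      simp only [hA1, hA2, hA3]
      ring
    rw [setIntegral_congr_fun measurableSet_box2 (fun x _ => hsp x)]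
    have i1 : IntegrableOn (fun x => 2 * a * A1 x + 2 * a * A2 x) box2 :=
      integrableOn_box2 ((continuous_const.mul cont_A1).add (continuous_const.mul cont_A2))
    have i2 : IntegrableOn (fun x => 2 * a * A2 x) box2 :=
      integrableOn_box2 (continuous_const.mul cont_A2)
    have i3 : IntegrableOn (fun x => 2 * A3 x) box2 :=
      integrableOn_box2 (continuous_const.mul cont_A3)
    have i12 : IntegrableOn (fun x => 2 * a * A1 x + 2 * a * A2 x - 2 * a * A2 x) box2 :=
      i1.sub i2
    rw [integral_sub i12 i3, integral_sub i1 i2, hQ12, hQ3, MeasureTheory.integral_const_mul]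
    ring
  have goal_eq : (fun s => l2sq2s (u s)) = fun s => ∫ x in box2, u s x ^ 2 := rfl
  rw [goal_eq]
  rw [show -2 * a * ∫ x in box2, A2 x
      = ∫ x in box2, deriv (fun s => u s x ^ 2) t from hint.symm] at *
  exact hD

end TAD
namespace TAD
open Function intervalIntegral

theorem main
    (T ν : ℝ) (hT : 0 < T) (hν : 0 < ν)
    (v : ℝ → E2 → E2) (ρ θ : ℝ → E2 → ℝ)
    (hv : SpaceTimeSmooth2v v) (hρ : SpaceTimeSmooth2s ρ) (hθ : SpaceTimeSmooth2s θ)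
    (hvper : ∀ t, Periodic2v (v t)) (hρper : ∀ t, Periodic2s (ρ t)) (hθper : ∀ t, Periodic2s (θ t))
    (hdf : ∀ t, DivFree2 (v t))
    (htransport : ∀ t ∈ Set.Icc (0:ℝ) T, ∀ x,
      deriv (fun s => ρ s x) t + fderiv ℝ (ρ t) x (v t x) = 0)
    (hadvdiff : IsAdvDiff ν (Set.Icc (0:ℝ) T) v θ)
    (hinit : θ 0 = ρ 0) :
    (∀ t ∈ Set.Icc (0:ℝ) T,
      l2sq2s (fun x => θ t x - ρ t x) ≤
        Real.sqrt (2 * ν * ∫ s in (0:ℝ)..T, gradsq2s (ρ s)) *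
          Real.sqrt (2 * ν * ∫ s in (0:ℝ)..T, gradsq2s (θ s))) ∧
    Real.sqrt (2 * ν * ∫ s in (0:ℝ)..T, gradsq2s (ρ s)) *
        Real.sqrt (2 * ν * ∫ s in (0:ℝ)..T, gradsq2s (θ s)) ≤
      Real.sqrt (2 * ν * ∫ s in (0:ℝ)..T, gradsq2s (ρ s)) * l2norm2s (ρ 0) := by
  classical
  set w : ℝ → E2 → ℝ := fun s x => θ s x - ρ s x with hwdef
  have hw : SpaceTimeSmooth2s w := by
    have h : Function.uncurry w = fun p => Function.uncurry θ p - Function.uncurry ρ p := rfl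
    show ContDiff ℝ (⊤ : ℕ∞) (Function.uncurry w)
    rw [h]; exact hθ.sub hρ
  have hwper : ∀ t, Periodic2s (w t) := fun t x k => by
    show θ t (x + per2 k) - ρ t (x + per2 k) = θ t x - ρ t x
    rw [hθper t x k, hρper t x k]
  -- slice differentiability
  have hdθ : ∀ t, Differentiable ℝ (θ t) := fun t => (slice_contDiff hθ t).differentiable mc_ne
  have hdρ : ∀ t, Differentiable ℝ (ρ t) := fun t => (slice_contDiff hρ t).differentiable mc_ne
  have hfw : ∀ s x, fderiv ℝ (w s) x = fderiv ℝ (θ s) x - fderiv ℝ (ρ s) x := fun s x =>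
    fderiv_sub (hdθ s x) (hdρ s x)
  -- key integrals
  set D : ℝ → ℝ := fun t => ∫ x in box2,
    ∑ i, fderiv ℝ (w t) x (e2 i) * fderiv ℝ (θ t) x (e2 i) with hDdef
  set Sθθ : ℝ → ℝ := fun t => ∫ x in box2,
    ∑ i, fderiv ℝ (θ t) x (e2 i) * fderiv ℝ (θ t) x (e2 i) with hSθθdef
  set Sρθ : ℝ → ℝ := fun t => ∫ x in box2,
    ∑ i, fderiv ℝ (ρ t) x (e2 i) * fderiv ℝ (θ t) x (e2 i) with hSρθdef
  -- continuity of all time-dependent integrals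
  have contsum : ∀ (f g : ℝ → E2 → ℝ), SpaceTimeSmooth2s f → SpaceTimeSmooth2s g →
      Continuous (fun t => ∫ x in box2, ∑ i, fderiv ℝ (f t) x (e2 i) * fderiv ℝ (g t) x (e2 i)) := by
    intro f g hf hg
    apply continuous_integral_box
    apply continuous_finset_sum
    intro i _
    exact (((continuous_fderiv_slice hf).clm_apply continuous_const).mul
      ((continuous_fderiv_slice hg).clm_apply continuous_const))
  have contD : Continuous D := contsum w θ hw hθ
  have contGρ : Continuous fun s => gradsq2s (ρ s) := by
    apply continuous_integral_box
    exact ((continuous_fderiv_slice hρ).norm).pow 2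
  have contGθ : Continuous fun s => gradsq2s (θ s) := by
    apply continuous_integral_box
    exact ((continuous_fderiv_slice hθ).norm).pow 2
  have hGρ_nonneg : ∀ s, 0 ≤ gradsq2s (ρ s) := fun s =>
    setIntegral_nonneg measurableSet_box2 (fun x _ => sq_nonneg _)
  have hGθ_nonneg : ∀ s, 0 ≤ gradsq2s (θ s) := fun s =>
    setIntegral_nonneg measurableSet_box2 (fun x _ => sq_nonneg _)
  -- integrability of spatial integrands
  have int_sum : ∀ (f g : ℝ → E2 → ℝ), SpaceTimeSmooth2s f → SpaceTimeSmooth2s g → ∀ s,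
      IntegrableOn (fun x => ∑ i, fderiv ℝ (f s) x (e2 i) * fderiv ℝ (g s) x (e2 i)) box2 := by
    intro f g hf hg s
    apply integrableOn_box2
    apply continuous_finset_sum
    intro i _
    exact ((((slice_contDiff hf s).continuous_fderiv mc_ne).clm_apply continuous_const).mul
      (((slice_contDiff hg s).continuous_fderiv mc_ne).clm_apply continuous_const))
  -- D = Sθθ - Sρθ
  have hDs : ∀ s, D s = Sθθ s - Sρθ s := by
    intro s
    have hpt : ∀ x : E2, (∑ i, fderiv ℝ (w s) x (e2 i) * fderiv ℝ (θ s) x (e2 i))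
        = (∑ i, fderiv ℝ (θ s) x (e2 i) * fderiv ℝ (θ s) x (e2 i))
          - (∑ i, fderiv ℝ (ρ s) x (e2 i) * fderiv ℝ (θ s) x (e2 i)) := by
      intro x
      rw [← Finset.sum_sub_distrib]
      refine Finset.sum_congr rfl fun i _ => ?_
      rw [hfw s x, ContinuousLinearMap.sub_apply]
      ring
    rw [hDdef]
    simp only
    rw [setIntegral_congr_fun measurableSet_box2 (fun x _ => hpt x),
      integral_sub (int_sum θ θ hθ hθ s) (int_sum ρ θ hρ hθ s)]
  -- Cauchy-Schwarz in space
  have hSρθ_le : ∀ s, Sρθ s ≤ Real.sqrt (gradsq2s (ρ s)) * Real.sqrt (gradsq2s (θ s)) := by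
    intro s
    have contnρ : Continuous fun x => ‖fderiv ℝ (ρ s) x‖ :=
      ((slice_contDiff hρ s).continuous_fderiv mc_ne).norm
    have contnθ : Continuous fun x => ‖fderiv ℝ (θ s) x‖ :=
      ((slice_contDiff hθ s).continuous_fderiv mc_ne).norm
    have step1 : Sρθ s ≤ ∫ x in box2, ‖fderiv ℝ (ρ s) x‖ * ‖fderiv ℝ (θ s) x‖ := by
      apply integral_mono (int_sum ρ θ hρ hθ s) (integrableOn_box2 (contnρ.mul contnθ))
      intro x
      exact sum_mul_le_opnorm _ _
    have step2 := integral_CS (volume.restrict box2)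
      (fun x => ‖fderiv ℝ (ρ s) x‖) (fun x => ‖fderiv ℝ (θ s) x‖)
      contnρ.aestronglyMeasurable.restrict contnθ.aestronglyMeasurable.restrict
      (integrableOn_box2 (contnρ.pow 2)) (integrableOn_box2 (contnθ.pow 2))
      (Filter.Eventually.of_forall fun x => norm_nonneg _)
      (Filter.Eventually.of_forall fun x => norm_nonneg _)
    exact step1.trans step2
  have hSθθ_nonneg : ∀ s, 0 ≤ Sθθ s := fun s =>
    setIntegral_nonneg measurableSet_box2 (fun x _ =>
      Finset.sum_nonneg fun i _ => mul_self_nonneg _)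
  -- pointwise bound on the derivative
  set H : ℝ → ℝ := fun s => 2 * ν * (Real.sqrt (gradsq2s (ρ s)) * Real.sqrt (gradsq2s (θ s)))
    with hHdef
  have hbound : ∀ s, -2 * ν * D s ≤ H s := by
    intro s
    rw [hDs s]
    have h2 : H s = 2 * ν * (Real.sqrt (gradsq2s (ρ s)) * Real.sqrt (gradsq2s (θ s))) := rfl
    rw [h2]
    have h1 := mul_le_mul_of_nonneg_left (hSρθ_le s) (by positivity : (0:ℝ) ≤ 2 * ν)
    nlinarith [hSθθ_nonneg s, mul_nonneg (le_of_lt hν) (hSθθ_nonneg s)]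
  have hH_nonneg : ∀ s, 0 ≤ H s := by
    intro s; rw [hHdef]; positivity
  have contH : Continuous H := by
    rw [hHdef]
    exact continuous_const.mul ((contGρ.sqrt).mul (contGθ.sqrt))
  -- energy derivative for w
  have hFw : ∀ t ∈ Set.Icc (0:ℝ) T, HasDerivAt (fun s => l2sq2s (w s)) (-2 * ν * D t) t := by
    intro t ht
    apply energy_deriv ν v w θ hv hw hθ hvper hwper hθper hdf t
    intro x
    have hθs : HasDerivAt (fun s => θ s x) (deriv (fun s => θ s x) t) t :=
      (hasDerivAt_slice hθ t x).congr_deriv (deriv_slice hθ t x).symm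
    have hρs : HasDerivAt (fun s => ρ s x) (deriv (fun s => ρ s x) t) t :=
      (hasDerivAt_slice hρ t x).congr_deriv (deriv_slice hρ t x).symm
    have hws := hθs.sub hρs
    have hwd : deriv (fun s => w s x) t
        = deriv (fun s => θ s x) t - deriv (fun s => ρ s x) t := hws.deriv
    rw [hwd]
    have h1 := hadvdiff t ht x
    have h2 := htransport t ht x
    have h3 : fderiv ℝ (w t) x (v t x)
        = fderiv ℝ (θ t) x (v t x) - fderiv ℝ (ρ t) x (v t x) := by
      rw [hfw t x]; rfl
    rw [h3]
    linarith
  -- energy derivative for θ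
  have hEθ : ∀ t ∈ Set.Icc (0:ℝ) T,
      HasDerivAt (fun s => l2sq2s (θ s)) (-2 * ν * gradsq2s (θ t)) t := by
    intro t ht
    have key := energy_deriv ν v θ θ hv hθ hθ hvper hθper hθper hdf t ?_
    · have hid : Sθθ t = gradsq2s (θ t) := by
        rw [hSθθdef]
        simp only
        apply setIntegral_congr_fun measurableSet_box2
        intro x _
        show (∑ i, fderiv ℝ (θ t) x (e2 i) * fderiv ℝ (θ t) x (e2 i))
            = ‖fderiv ℝ (θ t) x‖ ^ 2
        rw [opnorm_sq_eq]
        exact Finset.sum_congr rfl fun i _ => (sq _).symm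
      rw [show -2 * ν * gradsq2s (θ t) = -2 * ν * Sθθ t by rw [hid]]
      exact key
    · intro x
      have h1 := hadvdiff t ht x
      linarith
  -- FTC for w on [0, t]
  have hFw0 : l2sq2s (w 0) = 0 := by
    have h : ∀ x : E2, w 0 x = 0 := fun x => by
      show θ 0 x - ρ 0 x = 0
      rw [hinit]; ring
    show (∫ x in box2, (w 0 x) ^ 2) = 0
    rw [setIntegral_congr_fun measurableSet_box2 (fun x _ => by rw [h x])]
    simp
  set A := 2 * ν * ∫ s in (0:ℝ)..T, gradsq2s (ρ s) with hAdef
  set B := 2 * ν * ∫ s in (0:ℝ)..T, gradsq2s (θ s) with hBdef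
  -- time Cauchy-Schwarz
  have hCS_T : ∫ s in (0:ℝ)..T, H s ≤ Real.sqrt A * Real.sqrt B := by
    set f : ℝ → ℝ := fun s => Real.sqrt (2 * ν) * Real.sqrt (gradsq2s (ρ s)) with hfdef
    set g : ℝ → ℝ := fun s => Real.sqrt (2 * ν) * Real.sqrt (gradsq2s (θ s)) with hgdef
    have hfg : ∀ s, H s = f s * g s := by
      intro s
      rw [hHdef, hfdef, hgdef]
      simp only
      rw [show Real.sqrt (2*ν) * Real.sqrt (gradsq2s (ρ s))
          * (Real.sqrt (2*ν) * Real.sqrt (gradsq2s (θ s)))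
          = (Real.sqrt (2*ν) * Real.sqrt (2*ν)) * (Real.sqrt (gradsq2s (ρ s))
            * Real.sqrt (gradsq2s (θ s))) by ring,
        Real.mul_self_sqrt (by positivity)]
    have contf : Continuous f := continuous_const.mul contGρ.sqrt
    have contg : Continuous g := continuous_const.mul contGθ.sqrt
    have hf2 : ∀ s, f s ^ 2 = 2 * ν * gradsq2s (ρ s) := by
      intro s
      rw [hfdef]
      simp only
      rw [mul_pow, Real.sq_sqrt (by positivity), Real.sq_sqrt (hGρ_nonneg s)]
    have hg2 : ∀ s, g s ^ 2 = 2 * ν * gradsq2s (θ s) := by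
      intro s
      rw [hgdef]
      simp only
      rw [mul_pow, Real.sq_sqrt (by positivity), Real.sq_sqrt (hGθ_nonneg s)]
    rw [integral_of_le hT.le]
    rw [setIntegral_congr_fun measurableSet_Ioc (fun s _ => hfg s)]
    have hintf2 : IntegrableOn (fun s => f s ^ 2) (Set.Ioc 0 T) :=
      ((contf.pow 2).integrableOn_Icc).mono_set Set.Ioc_subset_Icc_self
    have hintg2 : IntegrableOn (fun s => g s ^ 2) (Set.Ioc 0 T) :=
      ((contg.pow 2).integrableOn_Icc).mono_set Set.Ioc_subset_Icc_self
    have key := integral_CS (volume.restrict (Set.Ioc 0 T)) f g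
      contf.aestronglyMeasurable.restrict contg.aestronglyMeasurable.restrict
      hintf2 hintg2
      (Filter.Eventually.of_forall fun s => by rw [hfdef]; positivity)
      (Filter.Eventually.of_forall fun s => by rw [hgdef]; positivity)
    have hA2 : ∫ s in Set.Ioc (0:ℝ) T, f s ^ 2 = A := by
      rw [setIntegral_congr_fun measurableSet_Ioc (fun s _ => hf2 s),
        MeasureTheory.integral_const_mul, hAdef, integral_of_le hT.le]
    have hB2 : ∫ s in Set.Ioc (0:ℝ) T, g s ^ 2 = B := by
      rw [setIntegral_congr_fun measurableSet_Ioc (fun s _ => hg2 s),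
        MeasureTheory.integral_const_mul, hBdef, integral_of_le hT.le]
    rw [hA2, hB2] at key
    exact key
  constructor
  · -- part 1
    intro t ht
    have hFTC : ∫ s in (0:ℝ)..t, (-2 * ν * D s) = l2sq2s (w t) - l2sq2s (w 0) := by
      apply integral_eq_sub_of_hasDerivAt
      · intro s hs
        rw [Set.uIcc_of_le ht.1] at hs
        exact hFw s ⟨hs.1, hs.2.trans ht.2⟩
      · exact (continuous_const.mul contD).intervalIntegrable 0 t
    have h1 : l2sq2s (w t) = ∫ s in (0:ℝ)..t, (-2 * ν * D s) := by
      rw [hFTC, hFw0, sub_zero]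
    have h2 : ∫ s in (0:ℝ)..t, (-2 * ν * D s) ≤ ∫ s in (0:ℝ)..t, H s := by
      apply integral_mono_on ht.1
        ((continuous_const.mul contD).intervalIntegrable 0 t)
        (contH.intervalIntegrable 0 t)
      intro s _
      exact hbound s
    have h3 : ∫ s in (0:ℝ)..t, H s ≤ ∫ s in (0:ℝ)..T, H s := by
      apply integral_mono_interval le_rfl ht.1 ht.2
      · exact Filter.Eventually.of_forall fun s => hH_nonneg s
      · exact contH.intervalIntegrable 0 T
    show l2sq2s (fun x => θ t x - ρ t x) ≤ Real.sqrt A * Real.sqrt B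
    calc l2sq2s (fun x => θ t x - ρ t x) = l2sq2s (w t) := rfl
    _ = ∫ s in (0:ℝ)..t, (-2 * ν * D s) := h1
    _ ≤ ∫ s in (0:ℝ)..t, H s := h2
    _ ≤ ∫ s in (0:ℝ)..T, H s := h3
    _ ≤ Real.sqrt A * Real.sqrt B := hCS_T
  · -- part 2
    have hFTCθ : ∫ s in (0:ℝ)..T, (-2 * ν * gradsq2s (θ s))
        = l2sq2s (θ T) - l2sq2s (θ 0) := by
      apply integral_eq_sub_of_hasDerivAt
      · intro s hs
        rw [Set.uIcc_of_le hT.le] at hs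
        exact hEθ s hs
      · exact (continuous_const.mul contGθ).intervalIntegrable 0 T
    have hBeq : B = l2sq2s (θ 0) - l2sq2s (θ T) := by
      have h : ∫ s in (0:ℝ)..T, (-2 * ν * gradsq2s (θ s))
          = -2 * ν * ∫ s in (0:ℝ)..T, gradsq2s (θ s) := integral_const_mul _ _
      rw [h] at hFTCθ
      rw [hBdef]
      linarith
    have hθT : 0 ≤ l2sq2s (θ T) :=
      setIntegral_nonneg measurableSet_box2 (fun x _ => sq_nonneg _)
    have hBle : B ≤ l2sq2s (ρ 0) := by
      rw [hBeq, ← hinit]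
      linarith
    have hsq : Real.sqrt B ≤ l2norm2s (ρ 0) := by
      show Real.sqrt B ≤ Real.sqrt (l2sq2s (ρ 0))
      exact Real.sqrt_le_sqrt hBle
    exact mul_le_mul_of_nonneg_left hsq (Real.sqrt_nonneg A)

end TAD

/-- Stability estimate between the transport and advection–diffusion evolutions with the
same smooth divergence-free drift and the same initial data. -/
theorem transport_advdiff_distance
    (T ν : ℝ) (hT : 0 < T) (hν : 0 < ν)
    (v : ℝ → E2 → E2) (ρ θ : ℝ → E2 → ℝ)
    (hv : SpaceTimeSmooth2v v) (hρ : SpaceTimeSmooth2s ρ) (hθ : SpaceTimeSmooth2s θ)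
    (hvper : ∀ t, Periodic2v (v t)) (hρper : ∀ t, Periodic2s (ρ t)) (hθper : ∀ t, Periodic2s (θ t))
    (hdf : ∀ t, DivFree2 (v t))
    (htransport : ∀ t ∈ Set.Icc (0:ℝ) T, ∀ x,
      deriv (fun s => ρ s x) t + fderiv ℝ (ρ t) x (v t x) = 0)
    (hadvdiff : IsAdvDiff ν (Set.Icc (0:ℝ) T) v θ)
    (hinit : θ 0 = ρ 0) :
    (∀ t ∈ Set.Icc (0:ℝ) T,
      l2sq2s (fun x => θ t x - ρ t x) ≤
        Real.sqrt (2 * ν * ∫ s in (0:ℝ)..T, gradsq2s (ρ s)) *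
          Real.sqrt (2 * ν * ∫ s in (0:ℝ)..T, gradsq2s (θ s))) ∧
    Real.sqrt (2 * ν * ∫ s in (0:ℝ)..T, gradsq2s (ρ s)) *
        Real.sqrt (2 * ν * ∫ s in (0:ℝ)..T, gradsq2s (θ s)) ≤
      Real.sqrt (2 * ν * ∫ s in (0:ℝ)..T, gradsq2s (ρ s)) * l2norm2s (ρ 0) := by
  exact TAD.main T ν hT hν v ρ θ hv hρ hθ hvper hρper hθper hdf htransport hadvdiff hinit

end
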